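/- Under the symmetry hypothesis, the Berezin transform commutes with R: if f, g : Fin n × Fin n → ℂ satisfy C_u f = D_u g (i.e. f = I_u g), then C_u (R f) = D_u (R g), where (R f) (k,l) = f (σ⁻¹ k, τ⁻¹ l). -/

import Mathlib

open Finset Matrix

/-- The symbol-to-operator map `C_u`. -/
noncomputable def Cmap {ι : Type*} [Fintype ι] (u : Matrix ι ι ℂ) (f : ι × ι → ℂ) :
    Matrix ι ι ℂ :=
  fun k k' => ∑ l, u k l * f (k, l) * (starRingEnd ℂ) (u k' l)

/-- The symbol-to-operator map `D_u`. -/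
noncomputable def Dmap {ι : Type*} [Fintype ι] (u : Matrix ι ι ℂ) (f : ι × ι → ℂ) :
    Matrix ι ι ℂ :=
  fun k k' => ∑ l, u k l * f (k', l) * (starRingEnd ℂ) (u k' l)

/-- The representation operator `R` associated to a pair of permutations. -/
def Rop {ι : Type*} (σ τ : Equiv.Perm ι) (f : ι × ι → ℂ) : ι × ι → ℂ :=
  fun p => f (σ⁻¹ p.1, τ⁻¹ p.2)

/-- the Berezin transform `I_u` commutes with the representation `R`: if
`f = I_u g` (i.e. `C_u f = D_u g`), then `R f = I_u (R g)` (i.e. `C_u (R f) = D_u (R g)`). -/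
theorem stmt10 (n : ℕ) (hn : 1 ≤ n) (u : Matrix (Fin n) (Fin n) ℂ)
    (hu : u * uᴴ = 1) (hne : ∀ k l, u k l ≠ 0)
    (σ τ : Equiv.Perm (Fin n)) (a b : Fin n → ℂ)
    (ha : ∀ k, ‖a k‖ = 1) (hb : ∀ l, ‖b l‖ = 1)
    (hsym : ∀ k l, a k * u (σ⁻¹ k) (τ⁻¹ l) * (starRingEnd ℂ) (b l) = u k l)
    (f g : Fin n × Fin n → ℂ) (hfg : Cmap u f = Dmap u g) :
    Cmap u (Rop σ τ f) = Dmap u (Rop σ τ g) := by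
  have hb1 : ∀ l, (starRingEnd ℂ) (b l) * b l = 1 := by
    intro l
    rw [mul_comm, Complex.mul_conj, ← Complex.sq_norm, hb l]
    norm_num
  have keyC : ∀ k k', Cmap u (Rop σ τ f) k k' =
      a k * (starRingEnd ℂ) (a k') * Cmap u f (σ⁻¹ k) (σ⁻¹ k') := by
    intro k k'
    simp only [Cmap, Rop, Finset.mul_sum]
    rw [← Equiv.sum_comp τ (fun l => u k l * f (σ⁻¹ k, τ⁻¹ l) * (starRingEnd ℂ) (u k' l))]
    refine Finset.sum_congr rfl fun l _ => ?_
    rw [← hsym k (τ l), ← hsym k' (τ l)]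
    simp only [← Equiv.Perm.mul_apply, inv_mul_cancel, Equiv.Perm.one_apply, _root_.map_mul, Complex.conj_conj]
    have h := hb1 (τ l)
    linear_combination (a k * u (σ⁻¹ k) l * f (σ⁻¹ k, l) * (starRingEnd ℂ) (a k') *
      (starRingEnd ℂ) (u (σ⁻¹ k') l)) * h
  have keyD : ∀ k k', Dmap u (Rop σ τ g) k k' =
      a k * (starRingEnd ℂ) (a k') * Dmap u g (σ⁻¹ k) (σ⁻¹ k') := by
    intro k k'
    simp only [Dmap, Rop, Finset.mul_sum]
    rw [← Equiv.sum_comp τ (fun l => u k l * g (σ⁻¹ k', τ⁻¹ l) * (starRingEnd ℂ) (u k' l))]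
    refine Finset.sum_congr rfl fun l _ => ?_
    rw [← hsym k (τ l), ← hsym k' (τ l)]
    simp only [← Equiv.Perm.mul_apply, inv_mul_cancel, Equiv.Perm.one_apply, _root_.map_mul, Complex.conj_conj]
    have h := hb1 (τ l)
    linear_combination (a k * u (σ⁻¹ k) l * g (σ⁻¹ k', l) * (starRingEnd ℂ) (a k') *
      (starRingEnd ℂ) (u (σ⁻¹ k') l)) * h
  funext k k'
  rw [keyC, keyD, hfg]
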